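/- arXiv:1804.01007 — 4 statements merged into one kernel-verified Lean document; each statement's English description precedes it below -/
import Mathlib

section
/- The function h(z) = (6z² − 6z + 1)(log z − log(1−z) − 3) − 6z + 3 satisfies the confluent Heun equation h''(z) + (1/z + 1/(z−1))h'(z) + (−6)/(z(z−1)) · h(z) = 0 for all z in the real interval (0,1). -/
private lemma hasDerivAt_h (z : ℝ) (hz : z ∈ Set.Ioo (0:ℝ) 1) :
    HasDerivAt (fun w : ℝ =>
        (6*w^2 - 6*w + 1) * (Real.log w - Real.log (1-w) - 3) - 6*w + 3)
      ((12*z - 6) * (Real.log z - Real.log (1-z) - 3)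
        + (6*z^2 - 6*z + 1) * (1/z + 1/(1-z)) - 6) z := by
  obtain ⟨h0, h1⟩ := hz
  have hz0 : z ≠ 0 := ne_of_gt h0
  have hz1 : (1:ℝ) - z ≠ 0 := by linarith
  have hlog1 : HasDerivAt (fun w : ℝ => Real.log w) (1/z) z := by
    simpa using Real.hasDerivAt_log hz0
  have hlin : HasDerivAt (fun w : ℝ => 1 - w) (-1) z := by
    exact (hasDerivAt_id' (x := z)).const_sub 1
  have hlog2 : HasDerivAt (fun w : ℝ => Real.log (1-w)) (-(1/(1-z))) z := by
    have := (Real.hasDerivAt_log hz1).comp z hlin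
    exact this.congr_deriv (by ring)
  have hP : HasDerivAt (fun w : ℝ => 6*w^2 - 6*w + 1) (12*z - 6) z := by
    have : HasDerivAt (fun w : ℝ => 6*w^2 - 6*w + 1) (6*(2*z) - 6 + 0) z := by
      exact (((hasDerivAt_pow 2 z).const_mul 6).sub
        ((hasDerivAt_id z).const_mul 6)).add (hasDerivAt_const z 1) |>.congr_deriv (by ring)
    simpa using this.congr_deriv (by ring)
  have hL : HasDerivAt (fun w : ℝ => Real.log w - Real.log (1-w) - 3)
      (1/z + 1/(1-z)) z := by
    have := (hlog1.sub hlog2).sub_const 3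
    simpa using this.congr_deriv (by ring)
  have := ((hP.mul hL).sub ((hasDerivAt_id z).const_mul 6)).add_const 3
  exact this.congr_deriv (by ring)

private lemma hasDerivAt_g (z : ℝ) (hz : z ∈ Set.Ioo (0:ℝ) 1) :
    HasDerivAt (fun w : ℝ =>
        (12*w - 6) * (Real.log w - Real.log (1-w) - 3)
          + (6*w^2 - 6*w + 1) * (1/w + 1/(1-w)) - 6)
      (12 * (Real.log z - Real.log (1-z) - 3)
        + (12*z - 6) * (1/z + 1/(1-z))
        + (12*z - 6) * (1/z + 1/(1-z))
        + (6*z^2 - 6*z + 1) * (-(1/z^2) + 1/(1-z)^2)) z := by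
  obtain ⟨h0, h1⟩ := hz
  have hz0 : z ≠ 0 := ne_of_gt h0
  have hz1 : (1:ℝ) - z ≠ 0 := by linarith
  have hlog1 : HasDerivAt (fun w : ℝ => Real.log w) (1/z) z := by
    simpa using Real.hasDerivAt_log hz0
  have hlin : HasDerivAt (fun w : ℝ => 1 - w) (-1) z := by
    exact (hasDerivAt_id' (x := z)).const_sub 1
  have hlog2 : HasDerivAt (fun w : ℝ => Real.log (1-w)) (-(1/(1-z))) z := by
    have := (Real.hasDerivAt_log hz1).comp z hlin
    exact this.congr_deriv (by ring)
  have hL : HasDerivAt (fun w : ℝ => Real.log w - Real.log (1-w) - 3)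
      (1/z + 1/(1-z)) z := by
    have := (hlog1.sub hlog2).sub_const 3
    simpa using this.congr_deriv (by ring)
  have hQ : HasDerivAt (fun w : ℝ => 12*w - 6) 12 z := by
    simpa using ((hasDerivAt_id z).const_mul 12).sub_const 6
  have hP : HasDerivAt (fun w : ℝ => 6*w^2 - 6*w + 1) (12*z - 6) z := by
    have : HasDerivAt (fun w : ℝ => 6*w^2 - 6*w + 1) (6*(2*z) - 6 + 0) z := by
      exact (((hasDerivAt_pow 2 z).const_mul 6).sub
        ((hasDerivAt_id z).const_mul 6)).add (hasDerivAt_const z 1) |>.congr_deriv (by ring)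
    simpa using this.congr_deriv (by ring)
  have hinv1 : HasDerivAt (fun w : ℝ => 1/w) (-(1/z^2)) z := by
    simpa [one_div] using hasDerivAt_inv hz0
  have hinv2 : HasDerivAt (fun w : ℝ => 1/(1-w)) (1/(1-z)^2) z := by
    have := (hasDerivAt_inv hz1).comp z hlin
    simp only [one_div]
    exact this.congr_deriv (by ring)
  have hR : HasDerivAt (fun w : ℝ => 1/w + 1/(1-w)) (-(1/z^2) + 1/(1-z)^2) z :=
    hinv1.add hinv2
  have := ((hQ.mul hL).add (hP.mul hR)).sub_const 6
  exact this.congr_deriv (by ring)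

/-- h(z) = (6z² − 6z + 1)(log z − log(1−z) − 3) − 6z + 3 satisfies the
confluent Heun equation h'' + (1/z + 1/(z−1)) h' − 6/(z(z−1)) h = 0 on (0,1). -/
theorem stmt_3 : ∀ z ∈ Set.Ioo (0:ℝ) 1,
    deriv (deriv (fun w : ℝ =>
        (6*w^2 - 6*w + 1) * (Real.log w - Real.log (1-w) - 3) - 6*w + 3)) z
      + ((1:ℝ)/z + (1:ℝ)/(z-1)) * deriv (fun w : ℝ =>
        (6*w^2 - 6*w + 1) * (Real.log w - Real.log (1-w) - 3) - 6*w + 3) z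
      + ((-6)/(z*(z-1))) *
        ((6*z^2 - 6*z + 1) * (Real.log z - Real.log (1-z) - 3) - 6*z + 3) = 0 := by
  intro z hz
  have hderiv_eq : Set.EqOn
      (deriv (fun w : ℝ =>
        (6*w^2 - 6*w + 1) * (Real.log w - Real.log (1-w) - 3) - 6*w + 3))
      (fun w : ℝ =>
        (12*w - 6) * (Real.log w - Real.log (1-w) - 3)
          + (6*w^2 - 6*w + 1) * (1/w + 1/(1-w)) - 6)
      (Set.Ioo (0:ℝ) 1) := fun w hw => (hasDerivAt_h w hw).deriv
  have hd1 : deriv (fun w : ℝ =>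
        (6*w^2 - 6*w + 1) * (Real.log w - Real.log (1-w) - 3) - 6*w + 3) z
      = (12*z - 6) * (Real.log z - Real.log (1-z) - 3)
          + (6*z^2 - 6*z + 1) * (1/z + 1/(1-z)) - 6 := hderiv_eq hz
  have hd2 : deriv (deriv (fun w : ℝ =>
        (6*w^2 - 6*w + 1) * (Real.log w - Real.log (1-w) - 3) - 6*w + 3)) z
      = 12 * (Real.log z - Real.log (1-z) - 3)
        + (12*z - 6) * (1/z + 1/(1-z))
        + (12*z - 6) * (1/z + 1/(1-z))
        + (6*z^2 - 6*z + 1) * (-(1/z^2) + 1/(1-z)^2) := by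
    have heq : deriv (fun w : ℝ =>
        (6*w^2 - 6*w + 1) * (Real.log w - Real.log (1-w) - 3) - 6*w + 3)
        =ᶠ[nhds z] (fun w : ℝ =>
        (12*w - 6) * (Real.log w - Real.log (1-w) - 3)
          + (6*w^2 - 6*w + 1) * (1/w + 1/(1-w)) - 6) :=
      Filter.eventuallyEq_of_mem (isOpen_Ioo.mem_nhds hz) hderiv_eq
    rw [heq.deriv_eq]
    exact (hasDerivAt_g z hz).deriv
  rw [hd1, hd2]
  obtain ⟨h0, h1⟩ := hz
  have hz0 : z ≠ 0 := ne_of_gt h0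
  have hz1 : (1:ℝ) - z ≠ 0 := by linarith
  have hz1' : z - 1 ≠ 0 := by linarith
  set a := Real.log z - Real.log (1-z) with ha
  field_simp
  ring
end

section
/- The function h(z) = cos(log(√(1−z) + i√z)) satisfies the confluent Heun equation h''(z) + ((1/2)/z + (1/2)/(z−1))h'(z) + (1/4)/(z(z−1)) · h(z) = 0 for all z in the real interval (0,1). -/
open Complex Real Set

noncomputable def gg (w : ℝ) : ℂ := (Real.sqrt (1-w) : ℂ) + Complex.I * (Real.sqrt w : ℂ)
noncomputable def cc (w : ℝ) : ℂ := Complex.I / (2 * (Real.sqrt (w*(1-w)) : ℂ))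

lemma sqrt_pos_of (z : ℝ) (hz : z ∈ Set.Ioo (0:ℝ) 1) : 0 < Real.sqrt (z*(1-z)) :=
  Real.sqrt_pos.2 (mul_pos hz.1 (by linarith [hz.2]))

lemma hg_deriv (z : ℝ) (hz : z ∈ Set.Ioo (0:ℝ) 1) :
    HasDerivAt gg (cc z * gg z) z := by
  obtain ⟨h0, h1⟩ := hz
  have ha : 0 < Real.sqrt (1-z) := Real.sqrt_pos.2 (by linarith)
  have hb : 0 < Real.sqrt z := Real.sqrt_pos.2 h0
  have d1 : HasDerivAt (fun w : ℝ => Real.sqrt (1-w)) (-(1 / (2 * Real.sqrt (1-z)))) z := by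
    have := (Real.hasDerivAt_sqrt (by intro h; linarith : (1:ℝ)-z ≠ 0)).comp z
      ((hasDerivAt_id z).const_sub 1)
    refine this.congr_deriv (Eq.symm ?_); field_simp
  have d2 : HasDerivAt (fun w : ℝ => Real.sqrt w) (1 / (2 * Real.sqrt z)) z :=
    Real.hasDerivAt_sqrt (ne_of_gt h0)
  have D : HasDerivAt gg ((-(1 / (2 * Real.sqrt (1-z))) : ℝ) + Complex.I * ((1 / (2 * Real.sqrt z) : ℝ) : ℂ)) z := by
    exact (d1.ofReal_comp).add ((d2.ofReal_comp).const_mul Complex.I)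
  convert D using 1
  have hs : (Real.sqrt (z*(1-z)) : ℝ) = Real.sqrt z * Real.sqrt (1-z) :=
    Real.sqrt_mul (le_of_lt h0) _
  have ha2 : (Real.sqrt (1-z) : ℝ)^2 = 1 - z := Real.sq_sqrt (by linarith)
  have hb2 : (Real.sqrt z : ℝ)^2 = z := Real.sq_sqrt (le_of_lt h0)
  unfold cc gg
  rw [hs]
  push_cast
  have hA : (Real.sqrt (1-z) : ℂ) ≠ 0 := by exact_mod_cast ne_of_gt ha
  have hB : (Real.sqrt z : ℂ) ≠ 0 := by exact_mod_cast ne_of_gt hb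
  field_simp
  ring_nf
  rw [Complex.I_sq]
  ring

lemma gg_slit (z : ℝ) (hz : z ∈ Set.Ioo (0:ℝ) 1) : gg z ∈ Complex.slitPlane := by
  refine Complex.mem_slitPlane_iff.2 (Or.inl ?_)
  have : (gg z).re = Real.sqrt (1-z) := by simp [gg]
  rw [this]; exact Real.sqrt_pos.2 (by linarith [hz.2])

lemma gg_ne (z : ℝ) (hz : z ∈ Set.Ioo (0:ℝ) 1) : gg z ≠ 0 :=
  Complex.slitPlane_ne_zero (gg_slit z hz)

lemma hL_deriv (z : ℝ) (hz : z ∈ Set.Ioo (0:ℝ) 1) :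
    HasDerivAt (fun w : ℝ => Complex.log (gg w)) (cc z) z := by
  have := (Complex.hasDerivAt_log (gg_slit z hz)).scomp z (hg_deriv z hz)
  refine this.congr_deriv (Eq.symm ?_)
  rw [smul_eq_mul]
  field_simp [gg_ne z hz]

lemma hH_deriv (z : ℝ) (hz : z ∈ Set.Ioo (0:ℝ) 1) :
    HasDerivAt (fun w : ℝ => Complex.cos (Complex.log (gg w)))
      (-Complex.sin (Complex.log (gg z)) * cc z) z := by
  have := (Complex.hasDerivAt_cos (Complex.log (gg z))).scomp z (hL_deriv z hz)
  refine this.congr_deriv (Eq.symm ?_)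
  rw [smul_eq_mul]; ring

lemma hs_deriv (z : ℝ) (hz : z ∈ Set.Ioo (0:ℝ) 1) :
    HasDerivAt (fun w : ℝ => Real.sqrt (w*(1-w)))
      ((1-2*z) / (2 * Real.sqrt (z*(1-z)))) z := by
  obtain ⟨h0, h1⟩ := hz
  have hne : z*(1-z) ≠ 0 := ne_of_gt (mul_pos h0 (by linarith))
  have inner : HasDerivAt (fun w : ℝ => w*(1-w)) (1-2*z) z := by
    have := (hasDerivAt_id z).mul ((hasDerivAt_id z).const_sub 1)
    refine this.congr_deriv (Eq.symm ?_); simp [id]; ring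
  have := (Real.hasDerivAt_sqrt hne).comp z inner
  refine this.congr_deriv (Eq.symm ?_); field_simp

lemma hcc_deriv (z : ℝ) (hz : z ∈ Set.Ioo (0:ℝ) 1) :
    HasDerivAt cc (-(Complex.I/4) * ((1-2*z) / (Real.sqrt (z*(1-z)))^3)) z := by
  have hs := sqrt_pos_of z hz
  have hsC : ((Real.sqrt (z*(1-z)) : ℝ) : ℂ) ≠ 0 := by exact_mod_cast ne_of_gt hs
  have d1 : HasDerivAt (fun w : ℝ => ((Real.sqrt (w*(1-w)) : ℝ) : ℂ))
      (((1-2*z) / (2 * Real.sqrt (z*(1-z))) : ℝ) : ℂ) z := (hs_deriv z hz).ofReal_comp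
  have dinv : HasDerivAt (fun w : ℝ => ((((Real.sqrt (w*(1-w)) : ℝ)) : ℂ))⁻¹)
      (-((((1-2*z) / (2 * Real.sqrt (z*(1-z))) : ℝ) : ℂ)) / (((Real.sqrt (z*(1-z)) : ℝ) : ℂ))^2) z := by
    have h2 := (hasDerivAt_inv hsC).scomp z d1
    refine h2.congr_deriv (Eq.symm ?_)
    rw [smul_eq_mul]
    field_simp
  have d2 := dinv.const_mul (Complex.I/2)
  have e : cc = fun w : ℝ => (Complex.I/2) * (((Real.sqrt (w*(1-w)) : ℝ) : ℂ))⁻¹ := by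
    funext w; unfold cc; field_simp
  rw [e]
  refine d2.congr_deriv (Eq.symm ?_)
  push_cast
  field_simp
  ring

lemma hF_deriv (z : ℝ) (hz : z ∈ Set.Ioo (0:ℝ) 1) :
    HasDerivAt (fun w : ℝ => -Complex.sin (Complex.log (gg w)) * cc w)
      (-(Complex.cos (Complex.log (gg z)) * cc z) * cc z
        + -Complex.sin (Complex.log (gg z)) * (-(Complex.I/4) * ((1-2*z) / (Real.sqrt (z*(1-z)))^3))) z := by
  have dsin : HasDerivAt (fun w : ℝ => -Complex.sin (Complex.log (gg w)))
      (-(Complex.cos (Complex.log (gg z)) * cc z)) z := by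
    have := ((Complex.hasDerivAt_sin (Complex.log (gg z))).scomp z (hL_deriv z hz)).neg
    refine this.congr_deriv (Eq.symm ?_)
    rw [smul_eq_mul]; ring
  exact dsin.mul (hcc_deriv z hz)

set_option maxRecDepth 8000 in
/-- h(z) = cos(log(√(1−z) + i√z)) (principal branches) satisfies the
confluent Heun equation h'' + ((1/2)/z + (1/2)/(z−1)) h' + (1/4)/(z(z−1)) h = 0
on the real interval (0,1). -/
theorem stmt_7 : ∀ z ∈ Set.Ioo (0:ℝ) 1,
    deriv (deriv (fun w : ℝ => Complex.cos (Complex.log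
        ((Real.sqrt (1-w) : ℂ) + Complex.I * (Real.sqrt w : ℂ))))) z
      + ((((1:ℂ)/2)/(z:ℂ) + ((1:ℂ)/2)/((z:ℂ)-1)) : ℂ) *
          deriv (fun w : ℝ => Complex.cos (Complex.log
            ((Real.sqrt (1-w) : ℂ) + Complex.I * (Real.sqrt w : ℂ)))) z
      + (((1:ℂ)/4)/((z:ℂ)*((z:ℂ)-1))) *
          Complex.cos (Complex.log
            ((Real.sqrt (1-z) : ℂ) + Complex.I * (Real.sqrt z : ℂ))) = 0 := by
  intro z hz
  have heq : (fun w : ℝ => Complex.cos (Complex.log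
      ((Real.sqrt (1-w) : ℂ) + Complex.I * (Real.sqrt w : ℂ))))
      = fun w : ℝ => Complex.cos (Complex.log (gg w)) := rfl
  rw [heq]
  have h1 : deriv (fun w : ℝ => Complex.cos (Complex.log (gg w))) z
      = -Complex.sin (Complex.log (gg z)) * cc z := (hH_deriv z hz).deriv
  have hev : deriv (fun w : ℝ => Complex.cos (Complex.log (gg w)))
      =ᶠ[nhds z] fun w : ℝ => -Complex.sin (Complex.log (gg w)) * cc w := by
    filter_upwards [Ioo_mem_nhds hz.1 hz.2] with w hw
    exact (hH_deriv w hw).deriv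
  have h2 : deriv (deriv (fun w : ℝ => Complex.cos (Complex.log (gg w)))) z
      = -(Complex.cos (Complex.log (gg z)) * cc z) * cc z
        + -Complex.sin (Complex.log (gg z)) * (-(Complex.I/4) * ((1-2*z) / (Real.sqrt (z*(1-z)))^3)) := by
    rw [hev.deriv_eq]
    exact (hF_deriv z hz).deriv
  rw [h1, h2]
  have hgz : Complex.cos (Complex.log (gg z))
      = Complex.cos (Complex.log ((Real.sqrt (1-z) : ℂ) + Complex.I * (Real.sqrt z : ℂ))) := rfl
  rw [← hgz]
  set C := Complex.cos (Complex.log (gg z))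
  set S := Complex.sin (Complex.log (gg z))
  obtain ⟨h0, h1'⟩ := hz
  have hs : 0 < Real.sqrt (z*(1-z)) := sqrt_pos_of z ⟨h0, h1'⟩
  have hs2 : (Real.sqrt (z*(1-z)))^2 = z*(1-z) := Real.sq_sqrt (le_of_lt (mul_pos h0 (by linarith)))
  have hsC : ((Real.sqrt (z*(1-z)) : ℝ) : ℂ) ≠ 0 := by exact_mod_cast ne_of_gt hs
  have hs2C : ((Real.sqrt (z*(1-z)) : ℝ) : ℂ)^2 = (z:ℂ)*(1-(z:ℂ)) := by
    rw [← Complex.ofReal_pow, hs2]; push_cast; ring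
  have hzC : (z:ℂ) ≠ 0 := by exact_mod_cast ne_of_gt h0
  have hz1C : (z:ℂ) - 1 ≠ 0 := by
    intro h; have : (z:ℂ) = 1 := by linear_combination h
    have : z = (1:ℝ) := by exact_mod_cast this
    linarith
  unfold cc
  have ha : (0:ℝ) < Real.sqrt (1-z) := Real.sqrt_pos.2 (by linarith)
  have hb : (0:ℝ) < Real.sqrt z := Real.sqrt_pos.2 h0
  have haC : ((Real.sqrt (1-z) : ℝ) : ℂ) ≠ 0 := by exact_mod_cast ne_of_gt ha
  have hbC : ((Real.sqrt z : ℝ) : ℂ) ≠ 0 := by exact_mod_cast ne_of_gt hb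
  have ha2C : ((Real.sqrt (1-z) : ℝ) : ℂ)^2 = 1 - (z:ℂ) := by
    rw [← Complex.ofReal_pow, Real.sq_sqrt (by linarith : (0:ℝ) ≤ 1-z)]; push_cast; ring
  have hb2C : ((Real.sqrt z : ℝ) : ℂ)^2 = (z:ℂ) := by
    rw [← Complex.ofReal_pow, Real.sq_sqrt (le_of_lt h0)]
  have hsplit : ((Real.sqrt (z*(1-z)) : ℝ) : ℂ) = ((Real.sqrt z : ℝ) : ℂ) * ((Real.sqrt (1-z) : ℝ) : ℂ) := by
    rw [← Complex.ofReal_mul, Real.sqrt_mul (le_of_lt h0)]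
  have hz1 : (z:ℂ) - 1 = -(((Real.sqrt (1-z) : ℝ) : ℂ)^2) := by rw [ha2C]; ring
  rw [hsplit, hz1, ← hb2C]
  have hA1 : ((Real.sqrt (1-z) : ℝ) : ℂ) * ((Real.sqrt (1-z) : ℝ) : ℂ)⁻¹ = 1 := mul_inv_cancel₀ haC
  have hB1 : ((Real.sqrt z : ℝ) : ℂ) * ((Real.sqrt z : ℝ) : ℂ)⁻¹ = 1 := mul_inv_cancel₀ hbC
  have hab : ((Real.sqrt (1-z) : ℝ) : ℂ)^2 + ((Real.sqrt z : ℝ) : ℂ)^2 = 1 := by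
    rw [ha2C, hb2C]; ring
  set A : ℂ := ((Real.sqrt (1-z) : ℝ) : ℂ)
  set B : ℂ := ((Real.sqrt z : ℝ) : ℂ)
  linear_combination (-(C*A⁻¹^2*B⁻¹^2)/4) * Complex.I_sq
    + (S*Complex.I/4)*A⁻¹*B⁻¹^3*(A*A⁻¹+1) * hA1
    - (S*Complex.I/4)*A⁻¹^3*B⁻¹*(B*B⁻¹+1) * hB1
    - (S*Complex.I/4)*A⁻¹^3*B⁻¹^3 * hab
end

section
/- The function h(z) = −i·sin(log(√(1−z) + i√z)) satisfies the confluent Heun equation h''(z) + ((1/2)/z + (1/2)/(z−1))h'(z) + (1/4)/(z(z−1)) · h(z) = 0 for all z in the real interval (0,1). -/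
open Complex

noncomputable def hHeun : ℝ → ℂ := fun w => -Complex.I * Complex.sin (Complex.log
    ((Real.sqrt (1-w) : ℂ) + Complex.I * (Real.sqrt w : ℂ)))

noncomputable def gHeun : ℝ → ℂ := fun w => Complex.cos (Complex.log
    ((Real.sqrt (1-w) : ℂ) + Complex.I * (Real.sqrt w : ℂ)))
    * (2 * ((Real.sqrt (1-w) : ℂ) * (Real.sqrt w : ℂ)))⁻¹

lemma hasDerivAt_A {z : ℝ} (hz1 : z < 1) :
    HasDerivAt (fun w : ℝ => ((Real.sqrt (1-w) : ℝ) : ℂ))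
      (-(1/(2*(Real.sqrt (1-z) : ℂ)))) z := by
  have h1 : HasDerivAt (fun w : ℝ => 1 - w) (-1) z := by
    simpa using (hasDerivAt_id z).const_sub 1
  have h2 := (Real.hasDerivAt_sqrt (by linarith : (1:ℝ)-z ≠ 0)).comp z h1
  have h3 := h2.ofReal_comp
  refine h3.congr_deriv ?_
  symm
  push_cast; ring

lemma hasDerivAt_B {z : ℝ} (hz0 : 0 < z) :
    HasDerivAt (fun w : ℝ => ((Real.sqrt w : ℝ) : ℂ)) (1/(2*(Real.sqrt z : ℂ))) z := by
  have := (Real.hasDerivAt_sqrt hz0.ne').ofReal_comp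
  convert this using 1
  push_cast; ring

lemma hasDerivAt_L {z : ℝ} (hz : z ∈ Set.Ioo (0:ℝ) 1) :
    HasDerivAt (fun w : ℝ => Complex.log ((Real.sqrt (1-w) : ℂ) + Complex.I * (Real.sqrt w : ℂ)))
      (Complex.I / (2 * ((Real.sqrt (1-z) : ℂ) * (Real.sqrt z : ℂ)))) z := by
  obtain ⟨hz0, hz1⟩ := hz
  have ha0 : (Real.sqrt (1-z) : ℂ) ≠ 0 :=
    Complex.ofReal_ne_zero.mpr (Real.sqrt_pos.mpr (by linarith : (0:ℝ) < 1 - z)).ne'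
  have hb0 : (Real.sqrt z : ℂ) ≠ 0 :=
    Complex.ofReal_ne_zero.mpr (Real.sqrt_pos.mpr hz0).ne'
  have hF := (hasDerivAt_A hz1).add ((hasDerivAt_B hz0).const_mul Complex.I)
  have hslit : ((Real.sqrt (1-z) : ℂ) + Complex.I * (Real.sqrt z : ℂ)) ∈ Complex.slitPlane := by
    rw [Complex.mem_slitPlane_iff]
    right
    simp only [Complex.add_im, Complex.ofReal_im, Complex.mul_im, Complex.I_re, Complex.I_im,
      Complex.ofReal_re, zero_add, one_mul, mul_zero, add_zero, zero_mul]
    exact_mod_cast (Real.sqrt_pos.mpr hz0).ne'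
  -- end hslit
  have := hF.clog_real hslit
  refine this.congr_deriv ?_
  symm
  simp only [Pi.add_apply]
  have hF0 : ((Real.sqrt (1-z) : ℂ) + Complex.I * (Real.sqrt z : ℂ)) ≠ 0 := by
    exact Complex.slitPlane_ne_zero hslit
  field_simp
  ring_nf
  simp [Complex.I_sq]
  ring

lemma hasDerivAt_hHeun {z : ℝ} (hz : z ∈ Set.Ioo (0:ℝ) 1) :
    HasDerivAt hHeun (gHeun z) z := by
  have hL := hasDerivAt_L hz
  have hs := (Complex.hasDerivAt_sin
      (Complex.log ((Real.sqrt (1-z) : ℂ) + Complex.I * (Real.sqrt z : ℂ)))).scomp z hL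
  have := hs.const_mul (-Complex.I)
  refine this.congr_deriv ?_
  symm
  unfold gHeun
  rw [smul_eq_mul]
  set a : ℂ := (Real.sqrt (1-z) : ℂ)
  set b : ℂ := (Real.sqrt z : ℂ)
  set c := Complex.cos (Complex.log (a + Complex.I * b))
  by_cases h0 : (2 : ℂ) * (a * b) = 0
  · rw [h0]; simp
  · field_simp
    ring_nf
    simp [Complex.I_sq]

lemma hasDerivAt_gHeun {z : ℝ} (hz : z ∈ Set.Ioo (0:ℝ) 1) :
    HasDerivAt gHeun
      (Complex.I / (2 * ((Real.sqrt (1-z) : ℂ) * (Real.sqrt z : ℂ)))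
          * (-Complex.sin (Complex.log ((Real.sqrt (1-z) : ℂ) + Complex.I * (Real.sqrt z : ℂ))))
          * (2 * ((Real.sqrt (1-z) : ℂ) * (Real.sqrt z : ℂ)))⁻¹
        + Complex.cos (Complex.log ((Real.sqrt (1-z) : ℂ) + Complex.I * (Real.sqrt z : ℂ)))
          * (-(2 * (-(1/(2*(Real.sqrt (1-z) : ℂ))) * (Real.sqrt z : ℂ)
              + (Real.sqrt (1-z) : ℂ) * (1/(2*(Real.sqrt z : ℂ)))))
            / (2 * ((Real.sqrt (1-z) : ℂ) * (Real.sqrt z : ℂ)))^2)) z := by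
  obtain ⟨hz0, hz1⟩ := hz
  have ha0 : (Real.sqrt (1-z) : ℂ) ≠ 0 :=
    Complex.ofReal_ne_zero.mpr (Real.sqrt_pos.mpr (by linarith : (0:ℝ) < 1 - z)).ne'
  have hb0 : (Real.sqrt z : ℂ) ≠ 0 :=
    Complex.ofReal_ne_zero.mpr (Real.sqrt_pos.mpr hz0).ne'
  have hL := hasDerivAt_L ⟨hz0, hz1⟩
  have hcos := (Complex.hasDerivAt_cos
      (Complex.log ((Real.sqrt (1-z) : ℂ) + Complex.I * (Real.sqrt z : ℂ)))).scomp z hL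
  have h2ab : (2:ℂ) * ((Real.sqrt (1-z) : ℂ) * (Real.sqrt z : ℂ)) ≠ 0 := by
    simp [ha0, hb0]
  have hP := (hasDerivAt_inv h2ab).scomp z
    (((hasDerivAt_A hz1).mul (hasDerivAt_B hz0)).const_mul 2)
  have := hcos.mul hP
  refine this.congr_deriv ?_
  symm
  simp only [smul_eq_mul, Function.comp_apply, Pi.mul_apply]
  field_simp

/-- h(z) = −i·sin(log(√(1−z) + i√z)) (principal branches) satisfies
the confluent Heun equation h'' + ((1/2)/z + (1/2)/(z−1)) h' + (1/4)/(z(z−1)) h = 0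
on the real interval (0,1). -/
theorem stmt_8 : ∀ z ∈ Set.Ioo (0:ℝ) 1,
    deriv (deriv (fun w : ℝ => -Complex.I * Complex.sin (Complex.log
        ((Real.sqrt (1-w) : ℂ) + Complex.I * (Real.sqrt w : ℂ))))) z
      + ((((1:ℂ)/2)/(z:ℂ) + ((1:ℂ)/2)/((z:ℂ)-1)) : ℂ) *
          deriv (fun w : ℝ => -Complex.I * Complex.sin (Complex.log
            ((Real.sqrt (1-w) : ℂ) + Complex.I * (Real.sqrt w : ℂ)))) z
      + (((1:ℂ)/4)/((z:ℂ)*((z:ℂ)-1))) *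
          (-Complex.I * Complex.sin (Complex.log
            ((Real.sqrt (1-z) : ℂ) + Complex.I * (Real.sqrt z : ℂ)))) = 0 := by
  intro z hz
  obtain ⟨hz0, hz1⟩ := hz
  have efun : (fun w : ℝ => -Complex.I * Complex.sin (Complex.log
      ((Real.sqrt (1-w) : ℂ) + Complex.I * (Real.sqrt w : ℂ)))) = hHeun := rfl
  rw [efun]
  have hev : deriv hHeun =ᶠ[nhds z] gHeun := by
    filter_upwards [isOpen_Ioo.mem_nhds (⟨hz0, hz1⟩ : z ∈ Set.Ioo (0:ℝ) 1)] with w hw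
    exact (hasDerivAt_hHeun hw).deriv
  rw [hev.deriv_eq, (hasDerivAt_gHeun ⟨hz0, hz1⟩).deriv, (hasDerivAt_hHeun ⟨hz0, hz1⟩).deriv]
  unfold gHeun
  have ha0 : (Real.sqrt (1-z) : ℂ) ≠ 0 :=
    Complex.ofReal_ne_zero.mpr (Real.sqrt_pos.mpr (by linarith : (0:ℝ) < 1 - z)).ne'
  have hb0 : (Real.sqrt z : ℂ) ≠ 0 :=
    Complex.ofReal_ne_zero.mpr (Real.sqrt_pos.mpr hz0).ne'
  have ha2 : ((Real.sqrt (1-z) : ℂ))^2 = 1 - (z:ℂ) := by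
    rw [← Complex.ofReal_pow, Real.sq_sqrt (by linarith : (0:ℝ) ≤ 1 - z)]
    push_cast; ring
  have hb2 : ((Real.sqrt z : ℂ))^2 = (z:ℂ) := by
    rw [← Complex.ofReal_pow, Real.sq_sqrt hz0.le]
  rw [show ((z:ℂ) - 1) = -(((Real.sqrt (1-z) : ℂ))^2) by rw [ha2]; ring,
      show ((z:ℂ)) = ((Real.sqrt z : ℂ))^2 from hb2.symm]
  set a : ℂ := (Real.sqrt (1-z) : ℂ)
  set b : ℂ := (Real.sqrt z : ℂ)
  clear_value a b
  clear efun hev ha2 hb2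
  generalize Complex.sin (Complex.log (a + Complex.I * b)) = s
  generalize Complex.cos (Complex.log (a + Complex.I * b)) = c
  field_simp
  have ha : a * a⁻¹ = 1 := mul_inv_cancel₀ ha0
  have hb : b * b⁻¹ = 1 := mul_inv_cancel₀ hb0
  ring
end

section
/- For any complex parameters q, α, γ, δ, ε with γ ∉ {0, −1, −2, ...}, the formal power series Σ bₙ zⁿ with coefficients defined by b₋₁ = 0, b₀ = 1 and n(γ−1+n)bₙ = (−q + (n−1)(γ+δ−ε+n−2))bₙ₋₁ + ((n−2)ε + α)bₙ₋₂ has radius of convergence at least 1; equivalently, for every r < 1 the sequence |bₙ|·rⁿ tends to 0. -/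
set_option maxHeartbeats 1000000 in
/-- the Taylor coefficients of HeunC_l defined by the three-term
recurrence (γ not a nonpositive integer) give a power series of radius of
convergence at least 1: for every 0 ≤ r < 1, |bₙ| rⁿ → 0. -/
theorem stmt_15 (q α γ δ ε : ℂ) (hγ : ∀ k : ℕ, γ ≠ -(k:ℂ))
    (b : ℤ → ℂ) (hbm : b (-1) = 0) (hb0 : b 0 = 1)
    (hrec : ∀ n : ℤ, 1 ≤ n →
      (n:ℂ)*(γ - 1 + n) * b n
        = (-q + ((n:ℂ)-1)*(γ+δ-ε+n-2)) * b (n-1) + (((n:ℂ)-2)*ε + α) * b (n-2)) :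
    ∀ r : ℝ, 0 ≤ r → r < 1 →
      Filter.Tendsto (fun n : ℕ => ‖b n‖ * r^n) Filter.atTop (nhds 0) := by
  intro r hr0 hr1
  set s : ℝ := 2 / (1 + r) with hs_def
  have hr1' : (0:ℝ) < 1 + r := by linarith
  have hs1 : 1 < s := by
    rw [hs_def, lt_div_iff₀ hr1']; linarith
  have hrs : r * s < 1 := by
    rw [hs_def, ← mul_div_assoc, div_lt_one hr1']; linarith
  have hrs0 : (0:ℝ) ≤ r * s := by positivity
  -- constants
  set K : ℝ := ‖δ - ε - 2‖ + ‖ε‖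
      + ‖-q - (γ + δ - ε - 2)‖ + ‖α - 2*ε‖ with hK_def
  have hK0 : 0 ≤ K := by positivity
  obtain ⟨N₀, hN₀⟩ := exists_nat_ge (‖γ - 1‖ + K / (s - 1))
  set N : ℕ := N₀ + 2 with hN_def
  -- nonvanishing of the leading coefficient
  have hD : ∀ n : ℕ, 1 ≤ n → ((n:ℂ) * (γ - 1 + n)) ≠ 0 := by
    intro n hn
    apply mul_ne_zero
    · exact_mod_cast Nat.cast_ne_zero.mpr (by omega)
    · intro h
      apply hγ (n - 1)
      have : ((n - 1 : ℕ) : ℂ) = (n : ℂ) - 1 := by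
        push_cast [Nat.cast_sub hn]; ring
      rw [this]
      linear_combination h
  -- key coefficient bound for n ≥ N
  have key : ∀ n : ℕ, N ≤ n →
      ‖-q + ((n:ℂ)-1)*(γ+δ-ε+n-2)‖ + ‖((n:ℂ)-2)*ε + α‖
        ≤ s * ‖(n:ℂ) * (γ - 1 + n)‖ := by
    intro n hn
    have hn1 : (1:ℝ) ≤ (n:ℝ) := by exact_mod_cast Nat.one_le_cast.mpr (by omega)
    have hP : (-q + ((n:ℂ)-1)*(γ+δ-ε+(n:ℂ)-2))
        = (n:ℂ)*(γ-1+n) + ((n:ℂ)*(δ-ε-2) + (-q - (γ+δ-ε-2))) := by ring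
    have hQ : (((n:ℂ)-2)*ε + α) = (n:ℂ)*ε + (α - 2*ε) := by ring
    have hPb : ‖-q + ((n:ℂ)-1)*(γ+δ-ε+(n:ℂ)-2)‖
        ≤ ‖(n:ℂ)*(γ-1+n)‖ + ((n:ℝ) * ‖δ-ε-2‖
            + ‖-q - (γ+δ-ε-2)‖) := by
      rw [hP]
      refine le_trans (norm_add_le _ _) ?_
      gcongr
      refine le_trans (norm_add_le _ _) ?_
      rw [norm_mul, Complex.norm_natCast]
    have hQb : ‖((n:ℂ)-2)*ε + α‖
        ≤ (n:ℝ) * ‖ε‖ + ‖α - 2*ε‖ := by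
      rw [hQ]
      refine le_trans (norm_add_le _ _) ?_
      rw [norm_mul, Complex.norm_natCast]
    -- lower bound on |D|
    have hDval : ‖(n:ℂ) * (γ - 1 + n)‖ = (n:ℝ) * ‖γ - 1 + n‖ := by
      rw [norm_mul, Complex.norm_natCast]
    have hsub : (n:ℝ) - ‖γ - 1‖ ≤ ‖γ - 1 + n‖ := by
      have h3 := norm_add_le (γ - 1 + (n:ℂ)) (-(γ - 1))
      have h4 : (γ - 1 + (n:ℂ)) + (-(γ - 1)) = (n:ℂ) := by ring
      rw [h4, norm_neg] at h3
      have h2 : ‖(n:ℂ)‖ = (n:ℝ) := Complex.norm_natCast n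
      linarith
    have hs1' : (0:ℝ) < s - 1 := by linarith
    have hKn : K / (s - 1) ≤ (n:ℝ) - ‖γ - 1‖ := by
      have hnN : (N₀:ℝ) ≤ (n:ℝ) := by exact_mod_cast Nat.cast_le.mpr (by omega)
      linarith
    have hK2 : K ≤ (s - 1) * ‖γ - 1 + n‖ := by
      rw [div_le_iff₀ hs1'] at hKn
      nlinarith [norm_nonneg (γ - 1 + n)]
    -- assemble
    have habs0 : (0:ℝ) ≤ ‖γ - 1 + n‖ := norm_nonneg _
    have h1 : (n:ℝ) * ‖δ-ε-2‖ + ‖-q - (γ+δ-ε-2)‖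
        + ((n:ℝ) * ‖ε‖ + ‖α - 2*ε‖) ≤ (n:ℝ) * K := by
      rw [hK_def]
      nlinarith [norm_nonneg (-q - (γ+δ-ε-2)), norm_nonneg (α - 2*ε),
        norm_nonneg (δ-ε-2), norm_nonneg ε]
    have h2 : (n:ℝ) * K ≤ (s - 1) * ‖(n:ℂ) * (γ - 1 + n)‖ := by
      rw [hDval]
      nlinarith
    rw [hDval] at hPb h2 ⊢
    linarith
  -- the abs sequence
  set aN : ℕ → ℝ := fun n => ‖b (n:ℤ)‖ with haN_def
  have haN0 : ∀ n, 0 ≤ aN n := fun n => norm_nonneg _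
  -- recurrence in terms of absolute values
  have hstep : ∀ n : ℕ, 2 ≤ n →
      ‖(n:ℂ) * (γ - 1 + n)‖ * aN n
        ≤ ‖-q + ((n:ℂ)-1)*(γ+δ-ε+n-2)‖ * aN (n-1)
          + ‖((n:ℂ)-2)*ε + α‖ * aN (n-2) := by
    intro n hn
    have h := hrec (n:ℤ) (by exact_mod_cast Nat.one_le_cast.mpr (by omega))
    have e1 : ((n:ℤ):ℂ) = (n:ℂ) := by push_cast; ring
    have e2 : (n:ℤ) - 1 = ((n-1 : ℕ) : ℤ) := by omega
    have e3 : (n:ℤ) - 2 = ((n-2 : ℕ) : ℤ) := by omega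
    rw [e1, e2, e3] at h
    have := congrArg (‖·‖) h
    rw [norm_mul] at this
    rw [haN_def]
    simp only
    rw [this]
    refine le_trans (norm_add_le _ _) ?_
    rw [norm_mul, norm_mul]
  -- geometric bound by induction
  set C : ℝ := max (aN N) (aN (N+1)) with hC_def
  have hC0 : 0 ≤ C := le_trans (haN0 N) (le_max_left _ _)
  have main : ∀ m : ℕ, aN (N+m) ≤ C * s^m ∧ aN (N+m+1) ≤ C * s^(m+1) := by
    intro m
    induction m with
    | zero =>
      constructor
      · calc aN (N+0) = aN N := by norm_num
          _ ≤ C := le_max_left _ _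
          _ = C * s^0 := by ring
      · calc aN (N+0+1) = aN (N+1) := by norm_num
          _ ≤ C := le_max_right _ _
          _ ≤ C * s^(0+1) := by simpa using mul_le_mul_of_nonneg_left hs1.le hC0
    | succ m ih =>
      obtain ⟨ih1, ih2⟩ := ih
      constructor
      · calc aN (N+(m+1)) = aN (N+m+1) := by ring_nf
          _ ≤ C * s^(m+1) := ih2
      · -- step at n = N+m+2
        set n : ℕ := N + m + 2 with hn_def
        have hn2 : 2 ≤ n := by omega
        have hnN : N ≤ n := by omega
        have h1 := hstep n hn2
        have h2 := key n hnN
        have en1 : n - 1 = N + m + 1 := by omega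
        have en2 : n - 2 = N + m := by omega
        rw [en1, en2] at h1
        have hDpos : 0 < ‖(n:ℂ) * (γ - 1 + n)‖ :=
          norm_pos_iff.mpr (hD n (by omega))
        have hA : aN (N+m+1) ≤ C * s^(m+1) := ih2
        have hB : aN (N+m) ≤ C * s^(m+1) := by
          calc aN (N+m) ≤ C * s^m := ih1
            _ ≤ C * s^(m+1) := by
              have : s^m ≤ s^(m+1) := by
                apply pow_le_pow_right₀ (by linarith) (by omega)
              nlinarith
        have hCs : 0 ≤ C * s^(m+1) := by positivity
        have hPabs : 0 ≤ ‖-q + ((n:ℂ)-1)*(γ+δ-ε+n-2)‖ := norm_nonneg _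
        have hQabs : 0 ≤ ‖((n:ℂ)-2)*ε + α‖ := norm_nonneg _
        have hfin : ‖(n:ℂ) * (γ - 1 + n)‖ * aN n
            ≤ ‖(n:ℂ) * (γ - 1 + n)‖ * (C * s^(m+2)) := by
          calc ‖(n:ℂ) * (γ - 1 + n)‖ * aN n
              ≤ ‖-q + ((n:ℂ)-1)*(γ+δ-ε+n-2)‖ * aN (N+m+1)
                + ‖((n:ℂ)-2)*ε + α‖ * aN (N+m) := h1
            _ ≤ (‖-q + ((n:ℂ)-1)*(γ+δ-ε+n-2)‖
                + ‖((n:ℂ)-2)*ε + α‖) * (C * s^(m+1)) := by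
                nlinarith [haN0 (N+m+1), haN0 (N+m)]
            _ ≤ (s * ‖(n:ℂ) * (γ - 1 + n)‖) * (C * s^(m+1)) := by
                nlinarith
            _ = ‖(n:ℂ) * (γ - 1 + n)‖ * (C * s^(m+2)) := by ring
        have := (mul_le_mul_iff_right₀ hDpos).mp hfin
        calc aN (N+(m+1)+1) = aN n := by rw [hn_def]; ring_nf
          _ ≤ C * s^(m+2) := this
          _ = C * s^(m+1+1) := by ring
  -- conclude with squeeze
  have hbound : ∀ m : ℕ, aN (m + N) * r^(m + N) ≤ C * (r*s)^m := by
    intro m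
    have h1 : aN (N+m) ≤ C * s^m := (main m).1
    have hrpow : r^(m+N) ≤ r^m := by
      calc r^(m+N) = r^m * r^N := by rw [pow_add]
        _ ≤ r^m * 1 := by
            apply mul_le_mul_of_nonneg_left _ (pow_nonneg hr0 m)
            exact pow_le_one₀ hr0 hr1.le
        _ = r^m := by ring
    calc aN (m+N) * r^(m+N) ≤ (C * s^m) * r^m := by
          have : aN (m+N) = aN (N+m) := by rw [add_comm]
          rw [this]
          have hrm : 0 ≤ r^(m+N) := pow_nonneg hr0 _
          nlinarith [haN0 (N+m), pow_nonneg hr0 m, pow_nonneg (by positivity : (0:ℝ) ≤ s) m]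
      _ = C * (r*s)^m := by rw [mul_pow]; ring
  have hlim : Filter.Tendsto (fun m : ℕ => C * (r*s)^m) Filter.atTop (nhds 0) := by
    have := tendsto_pow_atTop_nhds_zero_of_lt_one hrs0 hrs
    simpa using this.const_mul C
  have hshift : Filter.Tendsto (fun m : ℕ => aN (m+N) * r^(m+N)) Filter.atTop (nhds 0) := by
    apply squeeze_zero (fun m => mul_nonneg (haN0 _) (pow_nonneg hr0 _)) hbound hlim
  rw [← Filter.tendsto_add_atTop_iff_nat N]
  exact hshift
end
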